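/- If an n-agent network is k-redundant, then for any subsets S, L of {1,…,n} with |S| = n−k and |L| ≥ n−k, argmin_x Σ_{i∈S} ‖A_i x − b_i‖² = argmin_x Σ_{i∈L} ‖A_i x − b_i‖². -/

import Mathlib

open Matrix Finset

/-- The set of least squares solutions over the subset `S` of agents:
minimizers of `x ↦ ∑ i ∈ S, ‖A_i x − b_i‖²`. -/
def lsSet {n d : ℕ} {r : Fin n → ℕ} (A : ∀ i, Matrix (Fin (r i)) (Fin d) ℝ)
    (b : ∀ i, Fin (r i) → ℝ) (S : Finset (Fin n)) : Set (Fin d → ℝ) :=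
  {x | ∀ y : Fin d → ℝ,
      ∑ i ∈ S, ∑ j, ((A i *ᵥ x - b i) j) ^ 2 ≤ ∑ i ∈ S, ∑ j, ((A i *ᵥ y - b i) j) ^ 2}

/-- An `n`-agent network with data `(A_i, b_i)` is `k`-redundant if for any two subsets
`S₁, S₂` of agents with `|S₁| = |S₂| = n − k`, the least squares solution sets over
`S₁` and `S₂` coincide. -/
def kRedundant {n d : ℕ} {r : Fin n → ℕ} (A : ∀ i, Matrix (Fin (r i)) (Fin d) ℝ)
    (b : ∀ i, Fin (r i) → ℝ) (k : ℕ) : Prop :=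
  ∀ S₁ S₂ : Finset (Fin n), S₁.card = n - k → S₂.card = n - k →
    lsSet A b S₁ = lsSet A b S₂

section Aux

variable {n d : ℕ} {r : Fin n → ℕ} (A : ∀ i, Matrix (Fin (r i)) (Fin d) ℝ)
    (b : ∀ i, Fin (r i) → ℝ)

/-- The objective function over a subset of agents. -/
noncomputable def lsObj (S : Finset (Fin n)) (x : Fin d → ℝ) : ℝ :=
  ∑ i ∈ S, ∑ j, ((A i *ᵥ x - b i) j) ^ 2

lemma mem_lsSet_iff {S : Finset (Fin n)} {x : Fin d → ℝ} :
    x ∈ lsSet A b S ↔ ∀ y, lsObj A b S x ≤ lsObj A b S y := Iff.rfl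

/-- The stacked linear map. -/
noncomputable def lsMap (S : Finset (Fin n)) :
    (Fin d → ℝ) →ₗ[ℝ] EuclideanSpace ℝ ((i : Fin n) × Fin (r i)) where
  toFun x := WithLp.toLp 2 (fun t : (i : Fin n) × Fin (r i) => if t.1 ∈ S then (A t.1 *ᵥ x) t.2 else 0)
  map_add' x y := by
    ext t
    simp only [Matrix.mulVec_add, Pi.add_apply, PiLp.add_apply, PiLp.toLp_apply]
    split_ifs <;> simp
  map_smul' c x := by
    ext t
    simp only [Matrix.mulVec_smul, Pi.smul_apply, RingHom.id_apply, PiLp.smul_apply,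
      smul_eq_mul, PiLp.toLp_apply]
    split_ifs <;> simp

/-- The stacked target vector. -/
noncomputable def lsVec (S : Finset (Fin n)) :
    EuclideanSpace ℝ ((i : Fin n) × Fin (r i)) :=
  WithLp.toLp 2 (fun t : (i : Fin n) × Fin (r i) => if t.1 ∈ S then b t.1 t.2 else 0)

lemma lsObj_eq_norm_sq (S : Finset (Fin n)) (x : Fin d → ℝ) :
    lsObj A b S x = ‖lsMap A S x - lsVec b S‖ ^ 2 := by
  have hnn : (0:ℝ) ≤ ∑ t : (i : Fin n) × Fin (r i),
      ((lsMap A S x - lsVec b S) t) ^ 2 :=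
    Finset.sum_nonneg fun t _ => sq_nonneg _
  have hnorm : ‖lsMap A S x - lsVec b S‖ ^ 2
      = ∑ t : (i : Fin n) × Fin (r i), ((lsMap A S x - lsVec b S) t) ^ 2 := by
    rw [EuclideanSpace.norm_eq, Real.sq_sqrt]
    · simp [Real.norm_eq_abs, sq_abs]
    · exact Finset.sum_nonneg fun t _ => sq_nonneg _
  rw [hnorm, ← Finset.univ_sigma_univ, Finset.sum_sigma]
  have : ∀ i : Fin n, ∀ j : Fin (r i),
      ((lsMap A S x - lsVec b S) ⟨i, j⟩) ^ 2
        = if i ∈ S then ((A i *ᵥ x - b i) j) ^ 2 else 0 := by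
    intro i j
    simp only [lsMap, lsVec, LinearMap.coe_mk, AddHom.coe_mk, PiLp.sub_apply, Pi.sub_apply, PiLp.toLp_apply]
    split_ifs <;> simp
  have h2 : ∀ i : Fin n, ∑ j, ((lsMap A S x - lsVec b S) ⟨i, j⟩) ^ 2
      = if i ∈ S then ∑ j, ((A i *ᵥ x - b i) j) ^ 2 else 0 := by
    intro i
    rw [Finset.sum_congr rfl fun j _ => this i j]
    split_ifs <;> simp
  rw [Finset.sum_congr rfl fun i _ => h2 i, Finset.sum_ite_mem, Finset.univ_inter, lsObj]

/-- Least squares minimizers always exist. -/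
lemma lsSet_nonempty (S : Finset (Fin n)) : (lsSet A b S).Nonempty := by
  classical
  set K := LinearMap.range (lsMap A (n := n) (r := r) S) with hK
  set v := lsVec b S with hv
  obtain ⟨x₀, hx₀⟩ := (K.orthogonalProjectionOnto v).2
  refine ⟨x₀, fun y => ?_⟩
  have h1 : ‖v - (K.orthogonalProjectionOnto v : EuclideanSpace ℝ ((i : Fin n) × Fin (r i)))‖
      ≤ ‖v - lsMap A S y‖ := by
    show ‖v - K.starProjection v‖ ≤ _
    rw [Submodule.starProjection_minimal]
    exact ciInf_le ⟨0, fun c hc => by obtain ⟨w, rfl⟩ := hc; positivity⟩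
      (⟨lsMap A S y, LinearMap.mem_range_self _ _⟩ : K)
  rw [← hx₀] at h1
  have h2 : ‖lsMap A S x₀ - v‖ ≤ ‖lsMap A S y - v‖ := by
    rw [norm_sub_rev (lsMap A S x₀), norm_sub_rev (lsMap A S y)]; exact h1
  show lsObj A b S x₀ ≤ lsObj A b S y
  rw [lsObj_eq_norm_sq A b S x₀, lsObj_eq_norm_sq A b S y]
  exact pow_le_pow_left₀ (norm_nonneg _) h2 2

lemma lsObj_nonneg (S : Finset (Fin n)) (x : Fin d → ℝ) : 0 ≤ lsObj A b S x :=
  Finset.sum_nonneg fun i _ => Finset.sum_nonneg fun j _ => sq_nonneg _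

/-- Key identity: summing objectives over all erasures. -/
lemma sum_erase_obj (L : Finset (Fin n)) (x : Fin d → ℝ) :
    ∑ i ∈ L, lsObj A b (L.erase i) x = ((L.card : ℝ) - 1) * lsObj A b L x := by
  have : ∀ i ∈ L, lsObj A b (L.erase i) x
      = lsObj A b L x - ∑ j, ((A i *ᵥ x - b i) j) ^ 2 := by
    intro i hi
    rw [lsObj, Finset.sum_erase_eq_sub hi]; rfl
  rw [Finset.sum_congr rfl this, Finset.sum_sub_distrib, Finset.sum_const, nsmul_eq_mul]
  have : ∑ i ∈ L, ∑ j, ((A i *ᵥ x - b i) j) ^ 2 = lsObj A b L x := rfl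
  rw [this]; ring

end Aux

/-- If an `n`-agent network is `k`-redundant, then for any subsets
`S, L` with `|S| = n − k` and `|L| ≥ n − k`, the least squares solution sets over
`S` and `L` coincide. -/
theorem lsSet_eq_of_card_ge {n d : ℕ} {r : Fin n → ℕ}
    (A : ∀ i, Matrix (Fin (r i)) (Fin d) ℝ) (b : ∀ i, Fin (r i) → ℝ)
    (k : ℕ) (hk : k ≤ n - 1) (hred : kRedundant A b k)
    (S L : Finset (Fin n)) (hS : S.card = n - k) (hL : n - k ≤ L.card) :
    lsSet A b S = lsSet A b L := by
  classical
  rcases Nat.eq_zero_or_pos n with hn | hn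
  · subst hn
    have : S = L := Subsingleton.elim S L
    rw [this]
  have hp : 1 ≤ n - k := by omega
  obtain ⟨x₀, hx₀⟩ := lsSet_nonempty A b S
  -- strong induction on card of L
  suffices H : ∀ m : ℕ, ∀ L : Finset (Fin n), L.card = m → n - k ≤ L.card →
      lsSet A b S = lsSet A b L from H L.card L rfl hL
  intro m
  induction m with
  | zero => intro L hLc hLge; omega
  | succ m ih =>
    intro L hLc hLge
    rcases eq_or_lt_of_le hLge with heq | hlt
    · exact hred S L hS heq.symm
    -- now L.card = m + 1 > n - k, so m ≥ n - k ≥ 1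
    have hm : n - k ≤ m := by omega
    have hIH : ∀ i ∈ L, lsSet A b S = lsSet A b (L.erase i) := by
      intro i hi
      exact ih (L.erase i) (by rw [Finset.card_erase_of_mem hi, hLc]; rfl)
        (by rw [Finset.card_erase_of_mem hi, hLc]; omega)
    have hm1 : (1:ℝ) ≤ (m:ℝ) := by exact_mod_cast hm.trans' hp
    have hcard : ((L.card : ℝ) - 1) = (m : ℝ) := by
      rw [hLc]; push_cast; ring
    -- forward inclusion
    have hsub : lsSet A b S ⊆ lsSet A b L := by
      intro x hx y
      have hxy : ∀ i ∈ L, lsObj A b (L.erase i) x ≤ lsObj A b (L.erase i) y := by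
        intro i hi
        have : x ∈ lsSet A b (L.erase i) := (hIH i hi) ▸ hx
        exact this y
      have hsum := Finset.sum_le_sum hxy
      rw [sum_erase_obj, sum_erase_obj, hcard] at hsum
      show lsObj A b L x ≤ lsObj A b L y
      exact le_of_mul_le_mul_left hsum (by linarith)
    refine Set.Subset.antisymm hsub fun x hx => ?_
    -- reverse inclusion
    have hx₀L : x₀ ∈ lsSet A b L := hsub hx₀
    have hobj_eq : lsObj A b L x = lsObj A b L x₀ := le_antisymm (hx x₀) (hx₀L x)
    -- each erased objective at x equals at x₀
    have hsum_eq : ∑ i ∈ L, lsObj A b (L.erase i) x = ∑ i ∈ L, lsObj A b (L.erase i) x₀ := by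
      rw [sum_erase_obj, sum_erase_obj, hobj_eq]
    have hterm_le : ∀ i ∈ L, lsObj A b (L.erase i) x₀ ≤ lsObj A b (L.erase i) x := by
      intro i hi
      have : x₀ ∈ lsSet A b (L.erase i) := (hIH i hi) ▸ hx₀
      exact this x
    have hterm_eq : ∀ i ∈ L, lsObj A b (L.erase i) x = lsObj A b (L.erase i) x₀ := by
      by_contra hne
      push_neg at hne
      obtain ⟨i, hi, hnei⟩ := hne
      have hstrict : lsObj A b (L.erase i) x₀ < lsObj A b (L.erase i) x :=
        lt_of_le_of_ne (hterm_le i hi) (fun h => hnei h.symm)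
      have : ∑ i ∈ L, lsObj A b (L.erase i) x₀ < ∑ i ∈ L, lsObj A b (L.erase i) x :=
        Finset.sum_lt_sum hterm_le ⟨i, hi, hstrict⟩
      linarith
    -- L is nonempty
    obtain ⟨i, hi⟩ := Finset.card_pos.mp (by omega : 0 < L.card)
    have hxerase : x ∈ lsSet A b (L.erase i) := by
      intro y
      show lsObj A b (L.erase i) x ≤ lsObj A b (L.erase i) y
      rw [hterm_eq i hi]
      exact ((hIH i hi) ▸ hx₀ : x₀ ∈ lsSet A b (L.erase i)) y
    rw [hIH i hi]
    exact hxerase
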